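/- Let J₁, J₂ : ℝ³ → ℂ³ be essentially bounded with compact support, let (x̂₀, l, m) be an orthonormal basis of ℝ³, let e ∈ {l, m}, and let K = (k_min, k_max) with 0 < k_min < k_max. If e · E^∞(x̂₀, k; J₁) = e · E^∞(x̂₀, k; J₂) for all k ∈ K, then the slice projections agree almost everywhere: Ĵ₁,_e(α) = Ĵ₂,_e(α) for Lebesgue-almost every α ∈ ℝ. -/

import Mathlib

open MeasureTheory Complex

noncomputable section

abbrev R3 := EuclideanSpace ℝ (Fin 3)
abbrev C3 := EuclideanSpace ℂ (Fin 3)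

/-- The complex component of a ℂ³-vector in a real direction `e`. -/
def dotC (e : R3) (w : C3) : ℂ := ∑ i, (e i : ℂ) * w i

/-- The complexification of a real vector. -/
def cplx (x : R3) : C3 := (WithLp.equiv 2 (Fin 3 → ℂ)).symm fun i => (x i : ℂ)

/-- The electric far field pattern `E^∞(x̂, k; J) = iωμ (v − (x̂·v) x̂)`,
where `ω = k/√(εμ)` and `v = ∫ exp(−ik x̂·y) J(y) dy`. -/
def farField (ε μ k : ℝ) (J : R3 → C3) (x : R3) : C3 :=
  (Complex.I * ((k / Real.sqrt (ε * μ) : ℝ) : ℂ) * (μ : ℂ)) •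
    ((∫ y, Complex.exp (-Complex.I * (k : ℂ) * ((inner ℝ x y : ℝ) : ℂ)) • J y) -
      (dotC x (∫ y, Complex.exp (-Complex.I * (k : ℂ) * ((inner ℝ x y : ℝ) : ℂ)) • J y)) • cplx x)

/-- `Ĵ_e(α)`: the integral of `e·J` over the hyperplane `{y : y·x̂₀ + α = 0}`,
parametrized as `y = −α x̂₀ + s l + t m`. -/
def sliceProj (J : R3 → C3) (xhat l m e : R3) (α : ℝ) : ℂ :=
  ∫ st : ℝ × ℝ, dotC e (J (-α • xhat + st.1 • l + st.2 • m))



set_option synthInstance.maxHeartbeats 1000000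
set_option maxHeartbeats 1000000

open Filter
lemma aux_monpow_int {g : ℝ → ℂ} (hg : Integrable g) {R : ℝ}
    (hsupp : ∀ a : ℝ, R < |a| → g a = 0) (n : ℕ) (z : ℂ) :
    Integrable (fun a : ℝ => (a:ℂ)^n * Complex.exp (z * a) * g a) := by
  refine (hg.norm.const_mul (R^n * Real.exp (‖z‖ * R))).mono' ?_ ?_
  · exact (((Complex.continuous_ofReal.pow n).mul
      (Complex.continuous_exp.comp (continuous_const.mul
        Complex.continuous_ofReal))).aestronglyMeasurable).mul hg.1
  · filter_upwards with a
    by_cases h : g a = 0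
    · simp [h]
    · have haR : |a| ≤ R := not_lt.mp fun hc => h (hsupp a hc)
      have h0R : (0:ℝ) ≤ R := le_trans (abs_nonneg a) haR
      rw [norm_mul, norm_mul, norm_pow, Complex.norm_real, mul_assoc]
      have h1 : ‖Complex.exp (z * a)‖ ≤ Real.exp (‖z‖ * R) := by
        rw [Complex.norm_exp]
        apply Real.exp_le_exp.mpr
        have : (z * (a:ℂ)).re = z.re * a := by simp
        rw [this]
        calc z.re * a ≤ |z.re * a| := le_abs_self _
          _ = |z.re| * |a| := abs_mul _ _
          _ ≤ ‖z‖ * R := by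
              apply mul_le_mul (Complex.abs_re_le_norm z) haR (abs_nonneg a) (norm_nonneg z)
      have h2 : ‖a‖^n ≤ R^n := pow_le_pow_left₀ (norm_nonneg a) haR n
      calc ‖a‖^n * (‖Complex.exp (z*a)‖ * ‖g a‖)
          ≤ R^n * (Real.exp (‖z‖ * R) * ‖g a‖) := by
            apply mul_le_mul h2 (mul_le_mul_of_nonneg_right h1 (norm_nonneg _))
              (by positivity) (by positivity)
        _ = R^n * Real.exp (‖z‖ * R) * ‖g a‖ := by ring

lemma aux_ae_zero {g : ℝ → ℂ} (hg : Integrable g) {R : ℝ} (hR : 0 < R)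
    (hsupp : ∀ a : ℝ, R < |a| → g a = 0)
    (hmom : ∀ n : ℕ, ∫ a : ℝ, (a:ℂ)^n * g a = 0) :
    ∀ᵐ a : ℝ, g a = 0 := by
  have monpow : ∀ n : ℕ, Integrable (fun a : ℝ => (a:ℂ)^n * g a) := by
    intro n
    have := aux_monpow_int hg hsupp n 0
    simpa using this
  apply ae_eq_zero_of_integral_contDiff_smul_eq_zero hg.locallyIntegrable
  intro ψ hψ hψc
  -- polynomial integrals vanish
  have hpoly : ∀ p : Polynomial ℝ,
      Integrable (fun a : ℝ => ((Polynomial.eval a p : ℝ) : ℂ) * g a) ∧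
      ∫ a : ℝ, ((Polynomial.eval a p : ℝ) : ℂ) * g a = 0 := by
    intro p
    induction p using Polynomial.induction_on' with
    | add p q hp hq =>
      constructor
      · have := hp.1.add hq.1
        apply this.congr
        filter_upwards with a
        simp only [Pi.add_apply, Polynomial.eval_add]
        push_cast
        ring
      · have : (fun a : ℝ => ((Polynomial.eval a (p+q) : ℝ) : ℂ) * g a)
            = fun a : ℝ => ((Polynomial.eval a p : ℝ) : ℂ) * g a
              + ((Polynomial.eval a q : ℝ) : ℂ) * g a := by
          funext a; simp only [Polynomial.eval_add]; push_cast; ring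
        rw [this, integral_add hp.1 hq.1, hp.2, hq.2, add_zero]
    | monomial n c =>
      have heq : (fun a : ℝ => ((Polynomial.eval a (Polynomial.monomial n c) : ℝ) : ℂ) * g a)
          = fun a : ℝ => (c:ℂ) * ((a:ℂ)^n * g a) := by
        funext a; simp [Polynomial.eval_monomial]; push_cast; ring
      constructor
      · rw [heq]; exact (monpow n).const_mul _
      · rw [heq, integral_const_mul, hmom n, mul_zero]
  have key : ∀ ε : ℝ, 0 < ε → ‖∫ a : ℝ, ψ a • g a‖ ≤ ε * ∫ a : ℝ, ‖g a‖ := by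
    intro ε hε
    obtain ⟨p, hp⟩ := exists_polynomial_near_of_continuousOn (-R) R ψ
      hψ.continuous.continuousOn ε hε
    have hbnd : ∀ a : ℝ, ‖((ψ a - Polynomial.eval a p : ℝ) : ℂ) * g a‖ ≤ ε * ‖g a‖ := by
      intro a
      by_cases h : g a = 0
      · simp [h]
      · have haR : |a| ≤ R := not_lt.mp fun hc => h (hsupp a hc)
        have ha : a ∈ Set.Icc (-R) R := Set.mem_Icc.mpr (abs_le.mp haR)
        have := hp a ha
        rw [norm_mul, Complex.norm_real]
        apply mul_le_mul_of_nonneg_right _ (norm_nonneg _)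
        rw [Real.norm_eq_abs, abs_sub_comm]
        exact le_of_lt this
    have hsubint : Integrable (fun a : ℝ => ((ψ a - Polynomial.eval a p : ℝ) : ℂ) * g a) := by
      refine (hg.norm.const_mul ε).mono' ?_ (Filter.Eventually.of_forall hbnd)
      exact ((Complex.continuous_ofReal.comp
        (hψ.continuous.sub (Polynomial.continuous p))).aestronglyMeasurable).mul hg.1
    have hsplit : ∫ a : ℝ, ψ a • g a
        = (∫ a : ℝ, ((ψ a - Polynomial.eval a p : ℝ) : ℂ) * g a)
          + ∫ a : ℝ, ((Polynomial.eval a p : ℝ) : ℂ) * g a := by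
      rw [← integral_add hsubint (hpoly p).1]
      congr 1; funext a
      rw [Complex.real_smul]
      push_cast
      ring
    rw [hsplit, (hpoly p).2, add_zero]
    calc ‖∫ a : ℝ, ((ψ a - Polynomial.eval a p : ℝ) : ℂ) * g a‖
        ≤ ∫ a : ℝ, ε * ‖g a‖ :=
          norm_integral_le_of_norm_le (hg.norm.const_mul ε)
            (Filter.Eventually.of_forall hbnd)
      _ = ε * ∫ a : ℝ, ‖g a‖ := integral_const_mul ε _
  have hC : (0:ℝ) ≤ ∫ a : ℝ, ‖g a‖ := integral_nonneg fun a => norm_nonneg _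
  have hzero : ‖∫ a : ℝ, ψ a • g a‖ ≤ 0 := by
    apply le_of_forall_pos_le_add
    intro ε hε
    set C := ∫ a : ℝ, ‖g a‖ with hCdef
    have h1 := key (ε / (C + 1)) (by positivity)
    have h2 : ε / (C + 1) * C ≤ ε := by
      rw [div_mul_eq_mul_div, div_le_iff₀ (by linarith)]
      nlinarith
    linarith
  simpa using norm_le_zero_iff.mp hzero

lemma aux_fourier_band {g : ℝ → ℂ} (hg : Integrable g) {R : ℝ} (hR : 0 < R)
    (hsupp : ∀ a : ℝ, R < |a| → g a = 0)
    {kmin kmax : ℝ} (hkk : kmin < kmax)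
    (hvan : ∀ k ∈ Set.Ioo kmin kmax,
      ∫ a : ℝ, Complex.exp (-Complex.I * (k:ℂ) * (a:ℂ)) * g a = 0) :
    ∀ᵐ a : ℝ, g a = 0 := by
  set Fn : ℕ → ℂ → ℂ := fun n z => ∫ a : ℝ, (a:ℂ)^n * Complex.exp (z * a) * g a with hFn
  have hint := fun n z => aux_monpow_int hg hsupp n z
  -- derivative
  have hderiv : ∀ (n : ℕ) (z₀ : ℂ), HasDerivAt (Fn n) (Fn (n+1) z₀) z₀ := by
    intro n z₀
    have key := hasDerivAt_integral_of_dominated_loc_of_deriv_le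
      (F := fun z (a : ℝ) => (a:ℂ)^n * Complex.exp (z * a) * g a)
      (F' := fun z (a : ℝ) => (a:ℂ)^(n+1) * Complex.exp (z * a) * g a)
      (x₀ := z₀)
      (bound := fun a : ℝ => R^(n+1) * Real.exp ((‖z₀‖ + 1) * R) * ‖g a‖)
      (Metric.ball_mem_nhds z₀ one_pos)
      (Filter.Eventually.of_forall (fun z => (hint n z).1))
      (hint n z₀)
      ((hint (n+1) z₀).1)
      ?_ ((hg.norm.const_mul _)) ?_
    · exact key.2
    · -- bound
      filter_upwards with a
      intro z hz
      by_cases h : g a = 0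
      · simp [h]
      · have haR : |a| ≤ R := not_lt.mp fun hc => h (hsupp a hc)
        have h0R : (0:ℝ) ≤ R := le_trans (abs_nonneg a) haR
        have hzn : ‖z‖ ≤ ‖z₀‖ + 1 := by
          have h1 : ‖z - z₀‖ < 1 := mem_ball_iff_norm.mp hz
          calc ‖z‖ = ‖z₀ + (z - z₀)‖ := by ring_nf
            _ ≤ ‖z₀‖ + ‖z - z₀‖ := norm_add_le _ _
            _ ≤ ‖z₀‖ + 1 := by linarith
        rw [norm_mul, norm_mul, norm_pow, Complex.norm_real, mul_assoc]
        have h1 : ‖Complex.exp (z * a)‖ ≤ Real.exp ((‖z₀‖ + 1) * R) := by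
          rw [Complex.norm_exp]
          apply Real.exp_le_exp.mpr
          have hre : (z * (a:ℂ)).re = z.re * a := by simp
          rw [hre]
          calc z.re * a ≤ |z.re * a| := le_abs_self _
            _ = |z.re| * |a| := abs_mul _ _
            _ ≤ (‖z₀‖ + 1) * R :=
              mul_le_mul (le_trans (Complex.abs_re_le_norm z) hzn) haR (abs_nonneg a)
                (by positivity)
        have h2 : ‖a‖^(n+1) ≤ R^(n+1) := pow_le_pow_left₀ (norm_nonneg a) haR _
        calc ‖a‖^(n+1) * (‖Complex.exp (z*a)‖ * ‖g a‖)
            ≤ R^(n+1) * (Real.exp ((‖z₀‖+1) * R) * ‖g a‖) := by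
              apply mul_le_mul h2 (mul_le_mul_of_nonneg_right h1 (norm_nonneg _))
                (by positivity) (by positivity)
          _ = R^(n+1) * Real.exp ((‖z₀‖+1) * R) * ‖g a‖ := by ring
    · -- differentiability
      filter_upwards with a
      intro z _
      have h1 : HasDerivAt (fun z : ℂ => z * (a:ℂ)) (a:ℂ) z := hasDerivAt_mul_const _
      have h2 := h1.cexp
      have h3 := (h2.const_mul ((a:ℂ)^n)).mul_const (g a)
      convert h3 using 1
      · rfl
      push_cast [pow_succ]
      ring
  have hdiff : ∀ n, Differentiable ℂ (Fn n) := fun n z => (hderiv n z).differentiableAt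
  -- Fn 0 vanishes identically
  have hF0 : ∀ z : ℂ, Fn 0 z = 0 := by
    have hA : AnalyticOnNhd ℂ (Fn 0) Set.univ :=
      (hdiff 0).differentiableOn.analyticOnNhd isOpen_univ
    set k₀ : ℝ := (kmin + kmax) / 2 with hk₀
    set δ : ℝ := (kmax - kmin) / 4 with hδ
    have hδpos : 0 < δ := by rw [hδ]; linarith
    set z₀ : ℂ := -Complex.I * (k₀ : ℂ) with hz₀
    set u : ℕ → ℂ := fun j => -Complex.I * ((k₀ + δ / (j+1) : ℝ) : ℂ) with hu
    have hmem : ∀ j : ℕ, (k₀ + δ / (j+1)) ∈ Set.Ioo kmin kmax := by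
      intro j
      have hj : (0:ℝ) < (j:ℝ) + 1 := by positivity
      have h1 : 0 < δ / (j+1) := by positivity
      have h2 : δ / ((j:ℝ)+1) ≤ δ := by
        rw [div_le_iff₀ hj]; nlinarith
      constructor
      · rw [hk₀]; linarith
      · rw [hk₀] at *; rw [hδ] at h2; linarith
    have huz : Tendsto u atTop (nhdsWithin z₀ {z₀}ᶜ) := by
      rw [tendsto_nhdsWithin_iff]
      constructor
      · have h1 : Tendsto (fun j : ℕ => k₀ + δ / (j+1)) atTop (nhds k₀) := by
          have := tendsto_one_div_add_atTop_nhds_zero_nat (𝕜 := ℝ)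
          have h2 : Tendsto (fun j : ℕ => δ * (1 / (j+1))) atTop (nhds (δ * 0)) :=
            this.const_mul δ
          simp only [mul_zero] at h2
          have h3 := h2.const_add k₀
          simp only [add_zero] at h3
          convert h3 using 2 with j
          ring
        have h2 : Continuous (fun x : ℝ => -Complex.I * (x:ℂ)) :=
          continuous_const.mul Complex.continuous_ofReal
        have := (h2.tendsto k₀).comp h1
        exact this
      · filter_upwards with j
        simp only [Set.mem_compl_iff, Set.mem_singleton_iff, hu, hz₀]
        intro hcon
        have hI : (-Complex.I : ℂ) ≠ 0 := by simp [Complex.I_ne_zero]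
        have := mul_left_cancel₀ hI hcon
        have := Complex.ofReal_injective this
        have h1 : 0 < δ / ((j:ℝ)+1) := by positivity
        linarith
    have hfreq : ∃ᶠ z in nhdsWithin z₀ {z₀}ᶜ, Fn 0 z = 0 := by
      apply huz.frequently
      apply Frequently.of_forall
      intro j
      have := hvan _ (hmem j)
      rw [hFn]
      simp only
      rw [← this]
      congr 1
      funext a
      rw [pow_zero, one_mul]
    have := hA.eqOn_zero_of_preconnected_of_frequently_eq_zero isPreconnected_univ
      (Set.mem_univ z₀) hfreq
    intro z
    exact this (Set.mem_univ z)
  -- all Fn vanish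
  have hFn0 : ∀ n, ∀ z : ℂ, Fn n z = 0 := by
    intro n
    induction n with
    | zero => exact hF0
    | succ n ih =>
      intro z
      have h1 : Fn (n+1) z = deriv (Fn n) z := ((hderiv n z).deriv).symm
      have h2 : Fn n = fun _ => (0:ℂ) := funext ih
      rw [h1, h2]
      simp
  have hmom : ∀ n : ℕ, ∫ a : ℝ, (a:ℂ)^n * g a = 0 := by
    intro n
    have := hFn0 n 0
    rw [hFn] at this
    simp only [zero_mul, Complex.exp_zero, mul_one] at this
    exact this
  exact aux_ae_zero hg hR hsupp hmom

lemma exists_T (xhat l m : R3) (hxh : ‖xhat‖ = 1) (hl : ‖l‖ = 1) (hm : ‖m‖ = 1)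
    (hxl : (inner ℝ xhat l : ℝ) = 0) (hxm : (inner ℝ xhat m : ℝ) = 0)
    (hlm : (inner ℝ l m : ℝ) = 0) :
    ∃ T : (ℝ × ℝ × ℝ) ≃ᵐ R3, MeasurePreserving T volume volume ∧
      ∀ p : ℝ × ℝ × ℝ, T p = p.1 • xhat + p.2.1 • l + p.2.2 • m := by
  have horth : Orthonormal ℝ (![xhat, l, m]) := by
    have hxx : (inner ℝ xhat xhat : ℝ) = 1 := by
      rw [real_inner_self_eq_norm_sq, hxh]; norm_num
    have hll : (inner ℝ l l : ℝ) = 1 := by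
      rw [real_inner_self_eq_norm_sq, hl]; norm_num
    have hmm : (inner ℝ m m : ℝ) = 1 := by
      rw [real_inner_self_eq_norm_sq, hm]; norm_num
    have hlx : (inner ℝ l xhat : ℝ) = 0 := by rw [real_inner_comm]; exact hxl
    have hmx : (inner ℝ m xhat : ℝ) = 0 := by rw [real_inner_comm]; exact hxm
    have hml : (inner ℝ m l : ℝ) = 0 := by rw [real_inner_comm]; exact hlm
    rw [orthonormal_iff_ite]
    intro i j
    fin_cases i <;> fin_cases j <;>
      simp only [Matrix.cons_val_zero, Matrix.cons_val_one, Matrix.head_cons,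
        Matrix.cons_val_two, Matrix.tail_cons, Fin.mk_zero, Fin.mk_one] <;>
      first
        | exact hxx | exact hll | exact hmm
        | exact hxl | exact hxm | exact hlm
        | exact hlx | exact hmx | exact hml
  have hcard : Fintype.card (Fin 3) = Module.finrank ℝ R3 := by
    simp [finrank_euclideanSpace]
  let basis : Module.Basis (Fin 3) ℝ R3 :=
    basisOfLinearIndependentOfCardEqFinrank horth.linearIndependent hcard
  have hbc : ⇑basis = ![xhat, l, m] :=
    coe_basisOfLinearIndependentOfCardEqFinrank _ _
  let b : OrthonormalBasis (Fin 3) ℝ R3 := basis.toOrthonormalBasis (by rwa [hbc])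
  have hb : ∀ i, b i = ![xhat, l, m] i := by
    intro i
    rw [show b i = basis i from congrFun (Module.Basis.coe_toOrthonormalBasis _ _) i, hbc]
  refine ⟨(((MeasurableEquiv.refl ℝ).prodCongr (MeasurableEquiv.finTwoArrow).symm).trans
      ((MeasurableEquiv.piFinSuccAbove (fun _ : Fin 3 => ℝ) 0).symm.trans
        ((MeasurableEquiv.toLp 2 (Fin 3 → ℝ)).trans b.measurableEquiv.symm))), ?_, ?_⟩
  · have h1 : MeasurePreserving (MeasurableEquiv.finTwoArrow (α := ℝ)).symm volume volume :=
      (volume_preserving_finTwoArrow ℝ).symm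
    have h2 : MeasurePreserving
        (⇑((MeasurableEquiv.refl ℝ).prodCongr (MeasurableEquiv.finTwoArrow).symm))
        volume volume :=
      (MeasurePreserving.id (volume : Measure ℝ)).prod h1
    have h3 := (volume_preserving_piFinSuccAbove (fun _ : Fin 3 => ℝ) 0).symm
    have h4 := (EuclideanSpace.volume_preserving_symm_measurableEquiv_toLp (Fin 3)).symm
    have h5 := b.measurePreserving_measurableEquiv.symm
    exact ((h5.comp h4).comp h3).comp h2
  · intro p
    show b.measurableEquiv.symm ((MeasurableEquiv.toLp 2 (Fin 3 → ℝ))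
      ((MeasurableEquiv.piFinSuccAbove (fun _ : Fin 3 => ℝ) 0).symm
        (p.1, MeasurableEquiv.finTwoArrow.symm p.2))) = _
    have hbsymm : ∀ v : EuclideanSpace ℝ (Fin 3), b.measurableEquiv.symm v = b.repr.symm v :=
      fun v => rfl
    rw [hbsymm, ← b.sum_repr_symm]
    rw [Fin.sum_univ_three]
    have hv0 : ((MeasurableEquiv.toLp 2 (Fin 3 → ℝ))
        ((MeasurableEquiv.piFinSuccAbove (fun _ : Fin 3 => ℝ) 0).symm
          (p.1, MeasurableEquiv.finTwoArrow.symm p.2))) 0 = p.1 := rfl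
    have hv1 : ((MeasurableEquiv.toLp 2 (Fin 3 → ℝ))
        ((MeasurableEquiv.piFinSuccAbove (fun _ : Fin 3 => ℝ) 0).symm
          (p.1, MeasurableEquiv.finTwoArrow.symm p.2))) 1 = p.2.1 := rfl
    have hv2 : ((MeasurableEquiv.toLp 2 (Fin 3 → ℝ))
        ((MeasurableEquiv.piFinSuccAbove (fun _ : Fin 3 => ℝ) 0).symm
          (p.1, MeasurableEquiv.finTwoArrow.symm p.2))) 2 = p.2.2 := rfl
    rw [hv0, hv1, hv2, hb 0, hb 1, hb 2]
    simp

def dotCL (e : R3) : C3 →L[ℂ] ℂ := ∑ i, (e i : ℂ) • (EuclideanSpace.proj i : C3 →L[ℂ] ℂ)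

lemma dotCL_eq (e : R3) (w : C3) : dotCL e w = dotC e w := by
  simp [dotCL, dotC, ContinuousLinearMap.sum_apply]

lemma dotC_smul (e : R3) (c : ℂ) (w : C3) : dotC e (c • w) = c * dotC e w := by
  rw [← dotCL_eq, ← dotCL_eq, _root_.map_smul, smul_eq_mul]

lemma dotC_sub (e : R3) (w v : C3) : dotC e (w - v) = dotC e w - dotC e v := by
  rw [← dotCL_eq, ← dotCL_eq, ← dotCL_eq, _root_.map_sub]

lemma dotC_zero (e : R3) : dotC e (0 : C3) = 0 := by simp [dotC]

lemma dotC_cplx (e x : R3) : dotC e (cplx x) = ((inner ℝ e x : ℝ) : ℂ) := by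
  simp only [dotC, cplx, WithLp.equiv_symm_apply, PiLp.toLp_apply, PiLp.inner_apply, RCLike.inner_apply,
    conj_trivial]
  push_cast
  exact Finset.sum_congr rfl fun i _ => mul_comm _ _

lemma dotC_integral (e : R3) {f : R3 → C3} (hf : Integrable f volume) :
    dotC e (∫ y, f y) = ∫ y, dotC e (f y) := by
  rw [← dotCL_eq, ← ContinuousLinearMap.integral_comp_comm _ hf]
  simp only [dotCL_eq]

/-- If the far field components of two sources agree on a band of frequencies at a single
observation direction, then their slice projections agree almost everywhere. -/
theorem sliceProj_unique (ε μ : ℝ) (hε : 0 < ε) (hμ : 0 < μ)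
    (J₁ J₂ : R3 → C3) (hJ₁b : MemLp J₁ ⊤ volume) (hJ₁c : HasCompactSupport J₁)
    (hJ₂b : MemLp J₂ ⊤ volume) (hJ₂c : HasCompactSupport J₂)
    (xhat l m : R3) (hxh : ‖xhat‖ = 1) (hl : ‖l‖ = 1) (hm : ‖m‖ = 1)
    (hxl : (inner ℝ xhat l : ℝ) = 0) (hxm : (inner ℝ xhat m : ℝ) = 0)
    (hlm : (inner ℝ l m : ℝ) = 0)
    (e : R3) (he : e = l ∨ e = m)
    (kmin kmax : ℝ) (hkmin : 0 < kmin) (hkk : kmin < kmax)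
    (hEq : ∀ k ∈ Set.Ioo kmin kmax,
      dotC e (farField ε μ k J₁ xhat) = dotC e (farField ε μ k J₂ xhat)) :
    ∀ᵐ α : ℝ, sliceProj J₁ xhat l m e α = sliceProj J₂ xhat l m e α := by
  classical
  have hsqrt : 0 < Real.sqrt (ε * μ) := Real.sqrt_pos.mpr (mul_pos hε hμ)
  -- integrability of the sources
  have hJ₁i : Integrable J₁ volume := memLp_one_iff_integrable.mp
    (hJ₁b.mono_exponent_of_measure_support_ne_top
      (fun x hx => image_eq_zero_of_notMem_tsupport hx) hJ₁c.measure_lt_top.ne le_top)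
  have hJ₂i : Integrable J₂ volume := memLp_one_iff_integrable.mp
    (hJ₂b.mono_exponent_of_measure_support_ne_top
      (fun x hx => image_eq_zero_of_notMem_tsupport hx) hJ₂c.measure_lt_top.ne le_top)
  -- support radius
  obtain ⟨r₁, hr₁⟩ := hJ₁c.isBounded.subset_closedBall 0
  obtain ⟨r₂, hr₂⟩ := hJ₂c.isBounded.subset_closedBall 0
  set R : ℝ := max (max r₁ r₂) 1 with hRdef
  have hR : 0 < R := lt_of_lt_of_le one_pos (le_max_right _ _)
  have hzero : ∀ y : R3, R < ‖y‖ → J₁ y = 0 ∧ J₂ y = 0 := by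
    intro y hy
    constructor
    · apply image_eq_zero_of_notMem_tsupport
      intro hmem
      have h1 : ‖y‖ ≤ r₁ := by simpa [dist_zero_right] using hr₁ hmem
      have h2 : r₁ ≤ R := le_trans (le_max_left _ _) (le_max_left _ _)
      linarith
    · apply image_eq_zero_of_notMem_tsupport
      intro hmem
      have h1 : ‖y‖ ≤ r₂ := by simpa [dist_zero_right] using hr₂ hmem
      have h2 : r₂ ≤ R := le_trans (le_max_right _ _) (le_max_left _ _)
      linarith
  -- the isometry
  obtain ⟨T, hTmp, hTeq⟩ := exists_T xhat l m hxh hl hm hxl hxm hlm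
  have hxx : (inner ℝ xhat xhat : ℝ) = 1 := by
    rw [real_inner_self_eq_norm_sq, hxh]; norm_num
  have hinner : ∀ p : ℝ × ℝ × ℝ, (inner ℝ xhat (T p) : ℝ) = p.1 := by
    intro p
    rw [hTeq]
    rw [inner_add_right, inner_add_right, real_inner_smul_right, real_inner_smul_right,
      real_inner_smul_right, hxx, hxl, hxm]
    ring
  have hex : (inner ℝ e xhat : ℝ) = 0 := by
    rcases he with rfl | rfl
    · rw [real_inner_comm]; exact hxl
    · rw [real_inner_comm]; exact hxm
  -- u and integrability
  set u : R3 → ℂ := fun y => dotC e (J₁ y) - dotC e (J₂ y) with hudef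
  have hu₁ : Integrable (fun y => dotC e (J₁ y)) volume := by
    have := (dotCL e).integrable_comp hJ₁i
    simpa [dotCL_eq] using this
  have hu₂ : Integrable (fun y => dotC e (J₂ y)) volume := by
    have := (dotCL e).integrable_comp hJ₂i
    simpa [dotCL_eq] using this
  have hui : Integrable u volume := hu₁.sub hu₂
  -- phase function
  have hnorm1 : ∀ (k : ℝ) (r : ℝ), ‖Complex.exp (-Complex.I * (k:ℂ) * (r:ℂ))‖ = 1 := by
    intro k r
    rw [Complex.norm_exp]
    have : (-Complex.I * (k:ℂ) * (r:ℂ)).re = 0 := by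
      simp [Complex.mul_re]
    rw [this, Real.exp_zero]
  have hphasec : ∀ k : ℝ,
      Continuous fun y : R3 => Complex.exp (-Complex.I * (k:ℂ) * ((inner ℝ xhat y : ℝ):ℂ)) := by
    intro k
    apply Complex.continuous_exp.comp
    exact continuous_const.mul
      (Complex.continuous_ofReal.comp (Continuous.inner continuous_const continuous_id))
  have hphase : ∀ k : ℝ, MemLp
      (fun y : R3 => Complex.exp (-Complex.I * (k:ℂ) * ((inner ℝ xhat y : ℝ):ℂ))) ⊤ volume := by
    intro k
    apply memLp_top_of_bound (hphasec k).aestronglyMeasurable 1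
    filter_upwards with y
    rw [hnorm1]
  have hwint : ∀ (k : ℝ) (J : R3 → C3), Integrable J volume →
      Integrable (fun y => Complex.exp (-Complex.I * (k:ℂ) * ((inner ℝ xhat y : ℝ):ℂ)) • J y)
        volume := by
    intro k J hJ
    exact hJ.smul_of_top_right (hphase k)
  have hmul₁ : ∀ k : ℝ, Integrable
      (fun y => Complex.exp (-Complex.I * (k:ℂ) * ((inner ℝ xhat y : ℝ):ℂ)) * dotC e (J₁ y))
      volume :=
    fun k => hu₁.bdd_mul (hphasec k).aestronglyMeasurable (Filter.Eventually.of_forall fun y => le_of_eq (hnorm1 k _))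
  have hmul₂ : ∀ k : ℝ, Integrable
      (fun y => Complex.exp (-Complex.I * (k:ℂ) * ((inner ℝ xhat y : ℝ):ℂ)) * dotC e (J₂ y))
      volume :=
    fun k => hu₂.bdd_mul (hphasec k).aestronglyMeasurable (Filter.Eventually.of_forall fun y => le_of_eq (hnorm1 k _))
  -- key vanishing on the band
  have hkey : ∀ k ∈ Set.Ioo kmin kmax,
      ∫ y, Complex.exp (-Complex.I * (k:ℂ) * ((inner ℝ xhat y : ℝ):ℂ)) * u y = 0 := by
    intro k hk
    have hk0 : (0:ℝ) < k := lt_trans hkmin hk.1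
    set c : ℂ := Complex.I * ((k / Real.sqrt (ε*μ) : ℝ):ℂ) * (μ:ℂ) with hcdef
    have hc : c ≠ 0 := by
      apply mul_ne_zero (mul_ne_zero Complex.I_ne_zero _) _
      · exact Complex.ofReal_ne_zero.mpr (ne_of_gt (div_pos hk0 hsqrt))
      · exact Complex.ofReal_ne_zero.mpr (ne_of_gt hμ)
    have hw : ∀ J : R3 → C3, Integrable J volume →
        dotC e (farField ε μ k J xhat)
          = c * ∫ y, Complex.exp (-Complex.I * (k:ℂ) * ((inner ℝ xhat y : ℝ):ℂ)) * dotC e (J y) := by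
      intro J hJ
      unfold farField
      rw [dotC_smul, dotC_sub, dotC_smul, dotC_cplx, hex]
      simp only [Complex.ofReal_zero, mul_zero, sub_zero]
      rw [← hcdef]
      congr 1
      rw [dotC_integral e (hwint k J hJ)]
      congr 1
      funext y
      rw [dotC_smul]
    have h1 := hEq k hk
    rw [hw J₁ hJ₁i, hw J₂ hJ₂i] at h1
    have h2 := mul_left_cancel₀ hc h1
    have h3 : (fun y => Complex.exp (-Complex.I * (k:ℂ) * ((inner ℝ xhat y : ℝ):ℂ)) * u y)
        = fun y => Complex.exp (-Complex.I * (k:ℂ) * ((inner ℝ xhat y : ℝ):ℂ)) * dotC e (J₁ y)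
          - Complex.exp (-Complex.I * (k:ℂ) * ((inner ℝ xhat y : ℝ):ℂ)) * dotC e (J₂ y) := by
      funext y
      rw [hudef]
      simp only
      ring
    rw [h3, integral_sub (hmul₁ k) (hmul₂ k), h2, sub_self]
  -- transported integrability
  have hGu : Integrable (fun p : ℝ × ℝ × ℝ => u (T p)) volume :=
    (hTmp.integrable_comp_emb T.measurableEmbedding).mpr hui
  have hG₁ : Integrable (fun p : ℝ × ℝ × ℝ => dotC e (J₁ (T p))) volume :=
    (hTmp.integrable_comp_emb T.measurableEmbedding).mpr hu₁
  have hG₂ : Integrable (fun p : ℝ × ℝ × ℝ => dotC e (J₂ (T p))) volume :=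
    (hTmp.integrable_comp_emb T.measurableEmbedding).mpr hu₂
  have hvol : (volume : Measure (ℝ × ℝ × ℝ))
      = (volume : Measure ℝ).prod (volume : Measure (ℝ × ℝ)) := Measure.volume_eq_prod _ _
  have hGu' : Integrable (fun p : ℝ × ℝ × ℝ => u (T p))
      ((volume : Measure ℝ).prod (volume : Measure (ℝ × ℝ))) := by rwa [← hvol]
  set g : ℝ → ℂ := fun a => ∫ st : ℝ × ℝ, u (T (a, st)) with hgdef
  have hgint : Integrable g volume := hGu'.integral_prod_left
  have hgsupp : ∀ a : ℝ, R < |a| → g a = 0 := by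
    intro a ha
    have hz : ∀ st : ℝ × ℝ, u (T (a, st)) = 0 := by
      intro st
      have h1 : |(inner ℝ xhat (T (a, st)) : ℝ)| ≤ ‖T (a, st)‖ := by
        have := abs_real_inner_le_norm xhat (T (a, st))
        rwa [hxh, one_mul] at this
      rw [hinner] at h1
      have h2 := hzero _ (lt_of_lt_of_le ha h1)
      rw [hudef]
      simp only
      rw [h2.1, h2.2, dotC_zero, sub_self]
    rw [hgdef]
    simp only
    rw [show (fun st : ℝ × ℝ => u (T (a, st))) = fun _ => (0:ℂ) from funext hz]
    simp
  -- Fourier vanishing for g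
  have hvan' : ∀ k ∈ Set.Ioo kmin kmax,
      ∫ a : ℝ, Complex.exp (-Complex.I * (k:ℂ) * (a:ℂ)) * g a = 0 := by
    intro k hk
    have hint2 : Integrable (fun p : ℝ × ℝ × ℝ =>
        Complex.exp (-Complex.I * (k:ℂ) * ((p.1 : ℝ):ℂ)) * u (T p))
        ((volume : Measure ℝ).prod (volume : Measure (ℝ × ℝ))) := by
      rw [← hvol]
      refine hGu.bdd_mul ?_ (Filter.Eventually.of_forall fun p => le_of_eq (hnorm1 k _))
      exact (Complex.continuous_exp.comp
        (continuous_const.mul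
          (Complex.continuous_ofReal.comp continuous_fst))).aestronglyMeasurable
    have step1 : ∫ a : ℝ, Complex.exp (-Complex.I * (k:ℂ) * (a:ℂ)) * g a
        = ∫ p : ℝ × ℝ × ℝ, Complex.exp (-Complex.I * (k:ℂ) * ((p.1:ℝ):ℂ)) * u (T p)
            ∂((volume : Measure ℝ).prod (volume : Measure (ℝ × ℝ))) := by
      rw [integral_prod _ hint2]
      congr 1
      funext a
      rw [hgdef]
      simp only
      rw [integral_const_mul]
    have step2 : ∫ p : ℝ × ℝ × ℝ, Complex.exp (-Complex.I * (k:ℂ) * ((p.1:ℝ):ℂ)) * u (T p)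
            ∂((volume : Measure ℝ).prod (volume : Measure (ℝ × ℝ)))
        = ∫ y, Complex.exp (-Complex.I * (k:ℂ) * ((inner ℝ xhat y : ℝ):ℂ)) * u y := by
      rw [← hvol]
      rw [← hTmp.integral_comp'
        (fun y => Complex.exp (-Complex.I * (k:ℂ) * ((inner ℝ xhat y : ℝ):ℂ)) * u y)]
      congr 1
      funext p
      rw [hinner]
    rw [step1, step2]
    exact hkey k hk
  have hae := aux_fourier_band hgint hR hgsupp hkk hvan'
  -- slicewise integrability
  have hs₁ : ∀ᵐ a : ℝ, Integrable (fun st : ℝ × ℝ => dotC e (J₁ (T (a, st)))) volume := by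
    have : Integrable (fun p : ℝ × ℝ × ℝ => dotC e (J₁ (T p)))
        ((volume : Measure ℝ).prod (volume : Measure (ℝ × ℝ))) := by rwa [← hvol]
    exact this.prod_right_ae
  have hs₂ : ∀ᵐ a : ℝ, Integrable (fun st : ℝ × ℝ => dotC e (J₂ (T (a, st)))) volume := by
    have : Integrable (fun p : ℝ × ℝ × ℝ => dotC e (J₂ (T p)))
        ((volume : Measure ℝ).prod (volume : Measure (ℝ × ℝ))) := by rwa [← hvol]
    exact this.prod_right_ae
  -- transfer along negation
  have hneg : MeasurePreserving (fun α : ℝ => -α) volume volume :=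
    Measure.measurePreserving_neg volume
  have htend := hneg.quasiMeasurePreserving.tendsto_ae
  filter_upwards [htend.eventually ((hae.and (hs₁.and hs₂)))] with α hα
  obtain ⟨h0, h1, h2⟩ := hα
  have e₁ : sliceProj J₁ xhat l m e α = ∫ st : ℝ × ℝ, dotC e (J₁ (T (-α, st))) := by
    unfold sliceProj
    congr 1
    funext st
    rw [hTeq (-α, st)]
  have e₂ : sliceProj J₂ xhat l m e α = ∫ st : ℝ × ℝ, dotC e (J₂ (T (-α, st))) := by
    unfold sliceProj
    congr 1
    funext st
    rw [hTeq (-α, st)]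
  rw [e₁, e₂, ← sub_eq_zero, ← integral_sub h1 h2]
  exact h0
end
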